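/- Fix an integer k ≥ 0. For every polynomial r̄ ∈ ℂ[y] there exists a polynomial r ∈ ℂ[y], unique up to an additive constant, such that r(λ_{n−k/2}) − r(λ_{n−k/2−1}) = (λ_{n−k/2} − λ_{n−k/2−1})·r̄(λ_{n−(k+1)/2}) as Laurent polynomials in t = q^n. Conversely, for every polynomial r ∈ ℂ[y] there exists r̄ ∈ ℂ[y] with this property. The resulting linear map r ↦ r̄ (a discrete analog of differentiation) maps ℂ[y] onto ℂ[y] and its kernel consists exactly of the constant polynomials. -/

import Mathlib

open scoped BigOperators

namespace AW

noncomputable section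

/-- q-shifted factorial `(u;q)_n`. -/
def qpoch (q u : ℂ) (n : ℕ) : ℂ := ∏ l ∈ Finset.range n, (1 - u * q ^ l)

/-- `(u;q)_∞`. -/
def qpochInf (q u : ℂ) : ℂ := ∏' l : ℕ, (1 - u * q ^ l)

/-- Askey–Wilson polynomial `p_n(x;a,b,c,d)` as a function of `z`, `x = (z+1/z)/2`. -/
def awP (q a b c d : ℂ) (n : ℕ) (z : ℂ) : ℂ :=
  qpoch q (a * b) n * qpoch q (a * c) n * qpoch q (a * d) n / a ^ n *
    ∑ l ∈ Finset.range (n + 1),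
      qpoch q (q ^ (-(n : ℤ))) l * qpoch q (a * b * c * d * q ^ ((n : ℤ) - 1)) l *
          qpoch q (a * z) l * qpoch q (a / z) l * q ^ l /
        (qpoch q (a * b) l * qpoch q (a * c) l * qpoch q (a * d) l * qpoch q q l)

/-- `λ_n = (q^{-n}-1)(1-abcd q^{n-1})`. -/
def lamn (q a b c d : ℂ) (n : ℤ) : ℂ := (q ^ (-n) - 1) * (1 - a * b * c * d * q ^ (n - 1))

/-- `λ_γ` as a rational function of `t = q^γ`. -/
def lamt (q a b c d t : ℂ) : ℂ := (1 / t - 1) * (1 - a * b * c * d * t / q)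

/-- `ξ^a_n`. -/
def xiA (q a b c d : ℂ) (n : ℕ) : ℂ :=
  q ^ n * qpoch q (a * b * c * d / q) n /
    (a ^ n * (qpoch q (b * c) n * qpoch q (b * d) n * qpoch q (c * d) n * qpoch q q n))

/-- `ξ^{δ}_n`, where `δ : Fin 4` encodes which of `a,b,c,d` is distinguished. -/
def xiD (q a b c d : ℂ) (δ : Fin 4) (n : ℕ) : ℂ :=
  match δ with
  | ⟨0, _⟩ => xiA q a b c d n
  | ⟨1, _⟩ => xiA q b c d a n
  | ⟨2, _⟩ => xiA q c d a b n
  | ⟨3, _⟩ => xiA q d a b c n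

/-- `ξ^a_m p_m(x)` with the convention that it vanishes for negative `m`. -/
def xiP (q a b c d : ℂ) (m : ℤ) (z : ℂ) : ℂ :=
  if 0 ≤ m then xiA q a b c d m.toNat * awP q a b c d m.toNat z else 0

/-- `A^a_γ` as a rational function of `t = q^γ`. -/
def Acoef (q a b c d t : ℂ) : ℂ :=
  a * (1 - b * c * t) * (1 - b * d * t) * (1 - c * d * t) * (1 - q * t) /
    (q * (1 - a * b * c * d * t ^ 2 / q) * (1 - a * b * c * d * t ^ 2))

/-- `C^a_γ` as a rational function of `t = q^γ`. -/
def Ccoef (q a b c d t : ℂ) : ℂ :=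
  q * (1 - a * b * c * d * t / q ^ 2) * (1 - a * b * t / q) * (1 - a * c * t / q) *
      (1 - a * d * t / q) /
    (a * (1 - a * b * c * d * t ^ 2 / q ^ 2) * (1 - a * b * c * d * t ^ 2 / q))

/-- `B^a_γ` as a rational function of `t = q^γ`. -/
def Bcoef (q a b c d t : ℂ) : ℂ := a / q + q / a - Acoef q a b c d t - Ccoef q a b c d t

/-- The operator `L^a` acting on functions of `t = q^γ`. -/
def Lop (q a b c d : ℂ) (r : ℂ → ℂ) : ℂ → ℂ := fun t =>
  Acoef q a b c d t * r (q * t) + Bcoef q a b c d t * r t + Ccoef q a b c d t * r (t / q)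

/-- `L^{δ}` for `δ ∈ {a,b,c,d}`. -/
def LopD (q a b c d : ℂ) (δ : Fin 4) : (ℂ → ℂ) → ℂ → ℂ :=
  match δ with
  | ⟨0, _⟩ => Lop q a b c d
  | ⟨1, _⟩ => Lop q b c d a
  | ⟨2, _⟩ => Lop q c d a b
  | ⟨3, _⟩ => Lop q d a b c

/-- `f(L)` applied to a function `r` of `t = q^γ`. -/
def polyLop (L : (ℂ → ℂ) → ℂ → ℂ) (f : Polynomial ℂ) (r : ℂ → ℂ) : ℂ → ℂ := fun t =>
  ∑ i ∈ Finset.range (f.natDegree + 1), f.coeff i * (L^[i] r) t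

/-- `κ^{b;i,j}_n` as a Laurent polynomial in `t = q^n` (paper indexing `1 ≤ i, j ≤ k`). -/
def kapB (q a b c d : ℂ) (k i j : ℕ) (t : ℂ) : ℂ :=
  t ^ (-((k : ℤ) - 1)) * (b / a) ^ ((j : ℤ) - (i : ℤ)) *
    (qpoch q (a * c * t * q ^ (1 - (k : ℤ))) (k - i) *
      qpoch q (a * d * t * q ^ (1 - (k : ℤ))) (k - i)) *
    (qpoch q (b * c * t * q ^ (1 - (i : ℤ))) (i - 1) *
      qpoch q (b * d * t * q ^ (1 - (i : ℤ))) (i - 1))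

/-- `κ^{δ_j;i,j}_n`; equal to `1` when `δ_j = a`. -/
def kapD (q a b c d : ℂ) (δ : Fin 4) (k i j : ℕ) (t : ℂ) : ℂ :=
  match δ with
  | ⟨0, _⟩ => 1
  | ⟨1, _⟩ => kapB q a b c d k i j t
  | ⟨2, _⟩ => kapB q a c b d k i j t
  | ⟨3, _⟩ => kapB q a d c b k i j t

/-- `τ_n` as a Laurent polynomial in `t = q^n`. -/
def tauF (q a b c d : ℂ) (k : ℕ) (φ : Fin k → Polynomial ℂ) (δ : Fin k → Fin 4) (t : ℂ) : ℂ :=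
  Matrix.det (Matrix.of fun i j : Fin k =>
    kapD q a b c d (δ j) k ((i : ℕ) + 1) ((j : ℕ) + 1) t *
      Polynomial.eval (lamt q a b c d (t * q ^ (-(i : ℤ)))) (φ j))

/-- `p̂_n` as a function of `z`, `x = (z+1/z)/2`. -/
def phat (q a b c d : ℂ) (k : ℕ) (φ : Fin k → Polynomial ℂ) (δ : Fin k → Fin 4)
    (n : ℕ) (z : ℂ) : ℂ :=
  Matrix.det (Matrix.of fun i j : Fin (k + 1) =>
    if hj : (j : ℕ) < k then
      kapD q a b c d (δ ⟨j, hj⟩) k ((i : ℕ) + 1) ((j : ℕ) + 1) (q ^ (n : ℕ)) *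
        Polynomial.eval (lamn q a b c d ((n : ℤ) - (i : ℕ))) (φ ⟨j, hj⟩)
    else xiP q a b c d ((n : ℤ) - (i : ℕ)) z)

/-- the functions `n ↦ ψ^{(j)}_n = φ^{(j)}(λ_n)/ξ^{δ_j}_n` on `ℕ`. -/
def psiF (q a b c d : ℂ) (k : ℕ) (φ : Fin k → Polynomial ℂ) (δ : Fin k → Fin 4)
    (j : Fin k) : ℕ → ℂ := fun n =>
  Polynomial.eval (lamn q a b c d n) (φ j) / xiD q a b c d (δ j) n

/-- a function `ℂ∖{0} → ℂ` given by a Laurent polynomial. -/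
def IsLaurentFun (f : ℂ → ℂ) : Prop :=
  ∃ (p : Polynomial ℂ) (m : ℕ), ∀ t : ℂ, t ≠ 0 → f t = Polynomial.eval t p / t ^ m

/-- half-integer `λ_{n-j/2}` as a Laurent polynomial in `t = q^n`, where `q2 = q^{1/2}`. -/
def lamHalf (abcd q2 : ℂ) (j : ℤ) (t : ℂ) : ℂ :=
  (q2 ^ j / t - 1) * (1 - abcd * q2 ^ (-j - 2) * t)

/-- `ε^{(r)}_n` as a Laurent polynomial in `t = q^n`. -/
def epsF (abcd q2 : ℂ) (r : ℕ) (t : ℂ) : ℂ :=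
  if r % 4 = 0 ∨ r % 4 = 1 then 1
  else lamHalf abcd q2 ((r : ℤ) - 2) t - lamHalf abcd q2 (r : ℤ) t

end

end AW

open AW

namespace DDaux
open Polynomial

noncomputable def Oseq (S P : ℂ[X]) : ℕ → ℂ[X]
  | 0 => 0
  | 1 => 1
  | (n+2) => S * Oseq S P (n+1) - P * Oseq S P n

lemma Oseq_spec (S P : ℂ[X]) (u w x : ℂ) (h1 : u + w = S.eval x) (h2 : u * w = P.eval x) :
    ∀ n : ℕ, u ^ n - w ^ n = (u - w) * (Oseq S P n).eval x := by
  intro n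
  induction n using Nat.twoStepInduction with
  | zero => simp [Oseq]
  | one => simp [Oseq]
  | more n ih1 ih2 =>
    have h : u ^ (n+2) - w ^ (n+2)
        = (u + w) * (u^(n+1) - w^(n+1)) - (u*w) * (u^n - w^n) := by ring
    rw [h, ih1, ih2, h1, h2, show Oseq S P (n+2) = S * Oseq S P (n+1) - P * Oseq S P n from rfl]
    simp only [eval_sub, eval_mul]
    ring

lemma Oseq_coeff (σ τ e1 e0 : ℂ) (l : ℕ → ℂ) (hl1 : l 1 = 1) (hl2 : l 2 = σ)
    (hlrec : ∀ n, l (n+3) = σ * l (n+2) - l (n+1)) :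
    ∀ n, (Oseq (C σ * X + C τ) (X^2 + C e1 * X + C e0) (n+1)).natDegree ≤ n ∧
      (Oseq (C σ * X + C τ) (X^2 + C e1 * X + C e0) (n+1)).coeff n = l (n+1) := by
  set S : ℂ[X] := C σ * X + C τ with hS
  set P : ℂ[X] := X^2 + C e1 * X + C e0 with hP
  have hSdeg : S.natDegree ≤ 1 := by rw [hS]; compute_degree
  have hPdeg : P.natDegree ≤ 2 := by rw [hP]; compute_degree
  intro n
  induction n using Nat.twoStepInduction with
  | zero => simpa [Oseq] using hl1.symm
  | one =>
    have h2 : Oseq S P 2 = S := by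
      show S * Oseq S P 1 - P * Oseq S P 0 = S
      simp [Oseq]
    rw [h2]
    constructor
    · exact hSdeg
    · simp [hS, coeff_C, hl2]
  | more n ih1 ih2 =>
    obtain ⟨hd1, hc1⟩ := ih1
    obtain ⟨hd2', hc2'⟩ := ih2
    have hd2 : (Oseq S P (n+2)).natDegree ≤ n+1 := hd2'
    have hc2 : (Oseq S P (n+2)).coeff (n+1) = l (n+2) := hc2'
    have hrec : Oseq S P (n+3) = S * Oseq S P (n+2) - P * Oseq S P (n+1) := rfl
    constructor
    · rw [hrec]
      refine le_trans (natDegree_sub_le _ _) (max_le ?_ ?_)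
      · exact le_trans (natDegree_mul_le) (by omega)
      · exact le_trans (natDegree_mul_le) (by omega)
    · rw [hrec, coeff_sub]
      have hA : (S * Oseq S P (n+2)).coeff (n+2) = σ * l (n+2) := by
        rw [hS, add_mul, mul_assoc, coeff_add, coeff_C_mul, coeff_C_mul, coeff_X_mul,
          hc2, coeff_eq_zero_of_natDegree_lt (by omega : (Oseq S P (n+2)).natDegree < n+2)]
        ring
      have hB : (P * Oseq S P (n+1)).coeff (n+2) = l (n+1) := by
        rw [hP, add_mul, add_mul, mul_assoc, coeff_add, coeff_add, coeff_C_mul, coeff_C_mul,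
          coeff_X_mul]
        rw [coeff_X_pow_mul (Oseq S P (n+1)) 2 n, hc1,
          coeff_eq_zero_of_natDegree_lt (by omega : (Oseq S P (n+1)).natDegree < n+1),
          coeff_eq_zero_of_natDegree_lt (by omega : (Oseq S P (n+1)).natDegree < n+2)]
        ring
      rw [hA, hB, hlrec n]

/-- single-fraction forms of the three half-integer `λ`'s -/
lemma lam_frac (s A : ℂ) (hs : s ≠ 0) (k : ℕ) (t : ℂ) (ht : t ≠ 0) :
    lamHalf A s (k:ℤ) t = (s^k - t) * (s^k*s^2 - A*t) / (t*(s^k*s^2))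
    ∧ lamHalf A s ((k:ℤ)+1) t = (s^k*s - t) * (s^k*s^3 - A*t) / (t*(s^k*s^3))
    ∧ lamHalf A s ((k:ℤ)+2) t = (s^k*s^2 - t) * (s^k*s^4 - A*t) / (t*(s^k*s^4)) := by
  have hsk : s ^ k ≠ 0 := pow_ne_zero _ hs
  have hp : ∀ m : ℕ, s ^ ((k:ℤ) + (m:ℤ)) = s^k * s^m := by
    intro m; rw [zpow_add₀ hs, zpow_natCast, zpow_natCast]
  have a1 : s ^ ((k:ℤ)+1) = s^k * s := by
    have := hp 1; push_cast at this; simpa using this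
  have a2 : s ^ ((k:ℤ)+2) = s^k * s^2 := by
    have := hp 2; push_cast at this; simpa using this
  have b0 : s ^ (-(k:ℤ) - 2) = (s^k * s^2)⁻¹ := by
    rw [show -(k:ℤ) - 2 = -((k:ℤ) + ((2:ℕ):ℤ)) by push_cast; ring, zpow_neg, hp 2]
  have b1 : s ^ (-((k:ℤ)+1) - 2) = (s^k * s^3)⁻¹ := by
    rw [show -((k:ℤ)+1) - 2 = -((k:ℤ) + ((3:ℕ):ℤ)) by push_cast; ring, zpow_neg, hp 3]
  have b2 : s ^ (-((k:ℤ)+2) - 2) = (s^k * s^4)⁻¹ := by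
    rw [show -((k:ℤ)+2) - 2 = -((k:ℤ) + ((4:ℕ):ℤ)) by push_cast; ring, zpow_neg, hp 4]
  refine ⟨?_, ?_, ?_⟩ <;>
    simp only [lamHalf, zpow_natCast, a1, a2, b0, b1, b2] <;>
    first
      | (field_simp; ring)
      | field_simp

lemma I1 (s A t e : ℂ) (hs : s ≠ 0) (ht : t ≠ 0) (he : e ≠ 0) :
    (e - t) * (e*s^2 - A*t) / (t*(e*s^2)) + (e*s^2 - t) * (e*s^4 - A*t) / (t*(e*s^4))
      = (s^2+1)/s * ((e*s - t) * (e*s^3 - A*t) / (t*(e*s^3)))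
        + (s-1)^2*(s^2+A)/s^3 := by
  have h1 : t*(e*s^2) ≠ 0 := by simp [ht, he, hs]
  have h2 : t*(e*s^4) ≠ 0 := by simp [ht, he, hs]
  have h3 : s*(t*(e*s^3)) ≠ 0 := by simp [ht, he, hs]
  have h4 : (s:ℂ)^3 ≠ 0 := by simp [hs]
  rw [div_mul_div_comm, div_add_div _ _ h1 h2, div_add_div _ _ h3 h4,
    div_eq_div_iff (mul_ne_zero h1 h2) (mul_ne_zero h3 h4)]
  ring

lemma I2 (s A t e : ℂ) (hs : s ≠ 0) (ht : t ≠ 0) (he : e ≠ 0) :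
    (e - t) * (e*s^2 - A*t) / (t*(e*s^2)) * ((e*s^2 - t) * (e*s^4 - A*t) / (t*(e*s^4)))
      = ((e*s - t) * (e*s^3 - A*t) / (t*(e*s^3)))^2
        + (-((s-1)^2*(s^2+A)))/s^3 * ((e*s - t) * (e*s^3 - A*t) / (t*(e*s^3)))
        + (A*s*(s^2-1)^2 - (s-1)^2*(s^2+A)^2)/s^5 := by
  have h1 : t*(e*s^2) ≠ 0 := by simp [ht, he, hs]
  have h2 : t*(e*s^4) ≠ 0 := by simp [ht, he, hs]
  have hm : t*(e*s^3) ≠ 0 := by simp [ht, he, hs]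
  have hm2 : (t*(e*s^3))^2 ≠ 0 := pow_ne_zero _ hm
  have h3 : (s:ℂ)^3*(t*(e*s^3)) ≠ 0 := by simp [ht, he, hs]
  have h5 : (s:ℂ)^5 ≠ 0 := by simp [hs]
  rw [div_mul_div_comm, div_pow, div_mul_div_comm, div_add_div _ _ hm2 h3,
    div_add_div _ _ (mul_ne_zero hm2 h3) h5,
    div_eq_div_iff (mul_ne_zero h1 h2) (mul_ne_zero (mul_ne_zero hm2 h3) h5)]
  ring

lemma I3 (s A t e : ℂ) (hs : s ≠ 0) (ht : t ≠ 0) (he : e ≠ 0) :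
    (e*s^2 - t) * (e*s^4 - A*t) / (t*(e*s^4))
      = (e - t/s^2) * (e*s^2 - A*(t/s^2)) / ((t/s^2)*(e*s^2)) := by
  have hs2 : (s:ℂ)^2 ≠ 0 := by simp [hs]
  have hts : t/s^2 ≠ 0 := div_ne_zero ht hs2
  have h2 : t*(e*s^4) ≠ 0 := by simp [ht, he, hs]
  have hd : (t/s^2)*(e*s^2) ≠ 0 := mul_ne_zero hts (by simp [he, hs])
  rw [div_eq_div_iff h2 hd]
  field_simp

end DDaux

namespace DDaux

/-- `(x^n - x^{-n})/(x - x^{-1})` cleared to a nice form -/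
noncomputable def lRseq (x : ℝ) (n : ℕ) : ℝ := (x^(2*n) - 1) * x / ((x^2 - 1) * x^n)

lemma lRseq_one (x : ℝ) (hx : x ≠ 0) (hx1 : x^2 ≠ 1) : lRseq x 1 = 1 := by
  unfold lRseq
  rw [show 2*1 = 2 from rfl, pow_one]
  exact div_self (mul_ne_zero (sub_ne_zero.mpr hx1) hx)

lemma lRseq_two (x : ℝ) (hx : x ≠ 0) (hx1 : x^2 ≠ 1) : lRseq x 2 = (x^2+1)/x := by
  unfold lRseq
  rw [div_eq_div_iff (mul_ne_zero (sub_ne_zero.mpr hx1) (pow_ne_zero _ hx)) hx]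
  ring

lemma lRseq_rec (x : ℝ) (hx : x ≠ 0) (hx1 : x^2 ≠ 1) (n : ℕ) :
    lRseq x (n+3) = (x^2+1)/x * lRseq x (n+2) - lRseq x (n+1) := by
  unfold lRseq
  have h1 : (x^2 - 1) ≠ 0 := sub_ne_zero.mpr hx1
  have h2 : ∀ m : ℕ, (x^2 - 1) * x^m ≠ 0 := fun m => mul_ne_zero h1 (pow_ne_zero _ hx)
  rw [div_mul_div_comm, div_sub_div _ _ (mul_ne_zero hx (h2 (n+2))) (h2 (n+1)),
    div_eq_div_iff (h2 (n+3)) (mul_ne_zero (mul_ne_zero hx (h2 (n+2))) (h2 (n+1)))]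
  have e3 : 2*(n+3) = 2*n + 6 := by ring
  have e2 : 2*(n+2) = 2*n + 4 := by ring
  have e1 : 2*(n+1) = 2*n + 2 := by ring
  rw [e3, e2, e1]
  ring

lemma lRseq_pos (x : ℝ) (h0 : 0 < x) (h1 : x < 1) (n : ℕ) : 0 < lRseq x (n+1) := by
  unfold lRseq
  have hnum : (x^(2*(n+1)) - 1) * x < 0 := by
    have : x^(2*(n+1)) < 1 := pow_lt_one₀ (le_of_lt h0) h1 (by omega)
    nlinarith
  have hden : (x^2 - 1) * x^(n+1) < 0 := by
    have hx2 : x^2 < 1 := by nlinarith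
    have : (0:ℝ) < x^(n+1) := pow_pos h0 _
    nlinarith
  exact div_pos_of_neg_of_neg hnum hden

end DDaux

namespace DDaux
open Polynomial Filter

section rels
variable (S P : ℂ[X]) (u w m : ℂ → ℂ)
variable (hS : ∀ t : ℂ, t ≠ 0 → u t + w t = S.eval (m t))
variable (hP : ∀ t : ℂ, t ≠ 0 → u t * w t = P.eval (m t))

/-- the fundamental relation -/
def Rel (r p : ℂ[X]) : Prop :=
  ∀ t : ℂ, t ≠ 0 → r.eval (u t) - r.eval (w t) = (u t - w t) * p.eval (m t)

include hS hP

lemma rel_pow (n : ℕ) : Rel u w m (X^n) (Oseq S P n) := by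
  intro t ht
  simp only [eval_pow, eval_X]
  exact Oseq_spec S P _ _ _ (hS t ht) (hP t ht) n

lemma rel_lin (r : ℂ[X]) :
    Rel u w m r (∑ i ∈ Finset.range (r.natDegree+1), C (r.coeff i) * Oseq S P i) := by
  intro t ht
  rw [eval_eq_sum_range (u t), eval_eq_sum_range (w t), ← Finset.sum_sub_distrib,
    eval_finset_sum, Finset.mul_sum]
  refine Finset.sum_congr rfl fun i _ => ?_
  rw [eval_mul, eval_C, ← mul_sub, Oseq_spec S P _ _ _ (hS t ht) (hP t ht) i]
  ring

lemma rel_surj (l : ℕ → ℂ)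
    (hl : ∀ n, (Oseq S P (n+1)).natDegree ≤ n ∧ (Oseq S P (n+1)).coeff n = l (n+1))
    (hlne : ∀ n, l (n+1) ≠ 0) :
    ∀ n : ℕ, ∀ p : ℂ[X], p.natDegree ≤ n → ∃ r, Rel u w m r p := by
  intro n
  induction n with
  | zero =>
    intro p hp
    refine ⟨C (p.coeff 0) * X, fun t ht => ?_⟩
    rw [eq_C_of_natDegree_le_zero hp]
    simp only [eval_mul, eval_C, eval_X, coeff_C_zero]
    ring
  | succ n ih =>
    intro p hp
    set γ : ℂ := p.coeff (n+1) / l (n+2) with hγ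
    set p' : ℂ[X] := p - C γ * Oseq S P (n+2) with hp'
    have hOd : (Oseq S P (n+2)).natDegree ≤ n+1 := (hl (n+1)).1
    have hOc : (Oseq S P (n+2)).coeff (n+1) = l (n+2) := (hl (n+1)).2
    have hdeg : p'.natDegree ≤ n := by
      rw [natDegree_le_iff_coeff_eq_zero]
      intro N hN
      rcases eq_or_lt_of_le (Nat.succ_le_of_lt hN) with hE | hL
      · rw [hp', coeff_sub, coeff_C_mul, ← hE, hOc, hγ,
          div_mul_cancel₀ _ (hlne (n+1)), sub_self]
      · rw [hp', coeff_sub, coeff_C_mul,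
          coeff_eq_zero_of_natDegree_lt (lt_of_le_of_lt hp hL),
          coeff_eq_zero_of_natDegree_lt (lt_of_le_of_lt hOd hL)]
        ring
    obtain ⟨r', hr'⟩ := ih p' hdeg
    refine ⟨r' + C γ * X^(n+2), fun t ht => ?_⟩
    have h1 := hr' t ht
    have h2 := Oseq_spec S P _ _ _ (hS t ht) (hP t ht) (n+2)
    have hpd : p = p' + C γ * Oseq S P (n+2) := by rw [hp']; ring
    rw [hpd]
    simp only [eval_add, eval_mul, eval_C, eval_pow, eval_X]
    linear_combination h1 + γ * h2

end rels

lemma const_of_eval_eq (r : ℂ[X]) (v : ℕ → ℂ)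
    (hv : Tendsto (fun n => ‖v n‖) atTop atTop)
    (hconst : ∀ n, r.eval (v n) = r.eval (v 0)) : ∃ c : ℂ, r = C c := by
  by_cases hdeg : 0 < r.degree
  · exfalso
    have h := Polynomial.tendsto_norm_atTop r hdeg hv
    obtain ⟨n, hn⟩ := (h.eventually_gt_atTop ‖r.eval (v 0)‖).exists
    rw [hconst n] at hn
    exact lt_irrefl _ hn
  · exact ⟨r.coeff 0, eq_C_of_degree_le_zero (not_lt.mp hdeg)⟩

end DDaux



open Polynomial Filter Topology DDaux

theorem discrete_differentiation_map
    (q q2 : ℝ) (hq0 : 0 < q) (hq1 : q < 1) (hq2pos : 0 < q2) (hq2 : q2 ^ 2 = q)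
    (a b c d : ℂ) (ha : a ≠ 0) (hb : b ≠ 0) (hc : c ≠ 0) (hd : d ≠ 0)
    (k : ℕ) :
    -- (1)  for every `r̄` there is `r`, unique up to an additive constant, with
    --      `r(λ_{n-k/2}) - r(λ_{n-k/2-1}) = (λ_{n-k/2} - λ_{n-k/2-1}) r̄(λ_{n-(k+1)/2})`
    (∀ rbar : Polynomial ℂ, ∃ r : Polynomial ℂ,
      (∀ t : ℂ, t ≠ 0 →
        Polynomial.eval (lamHalf (a * b * c * d) (q2 : ℂ) (k : ℤ) t) r -
            Polynomial.eval (lamHalf (a * b * c * d) (q2 : ℂ) ((k : ℤ) + 2) t) r =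
          (lamHalf (a * b * c * d) (q2 : ℂ) (k : ℤ) t -
              lamHalf (a * b * c * d) (q2 : ℂ) ((k : ℤ) + 2) t) *
            Polynomial.eval (lamHalf (a * b * c * d) (q2 : ℂ) ((k : ℤ) + 1) t) rbar) ∧
      ∀ r' : Polynomial ℂ,
        (∀ t : ℂ, t ≠ 0 →
          Polynomial.eval (lamHalf (a * b * c * d) (q2 : ℂ) (k : ℤ) t) r' -
              Polynomial.eval (lamHalf (a * b * c * d) (q2 : ℂ) ((k : ℤ) + 2) t) r' =
            (lamHalf (a * b * c * d) (q2 : ℂ) (k : ℤ) t -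
                lamHalf (a * b * c * d) (q2 : ℂ) ((k : ℤ) + 2) t) *
              Polynomial.eval (lamHalf (a * b * c * d) (q2 : ℂ) ((k : ℤ) + 1) t) rbar) →
        ∃ c0 : ℂ, r' = r + Polynomial.C c0) ∧
    -- (2)  conversely, for every `r` there exists `r̄`
    (∀ r : Polynomial ℂ, ∃ rbar : Polynomial ℂ, ∀ t : ℂ, t ≠ 0 →
      Polynomial.eval (lamHalf (a * b * c * d) (q2 : ℂ) (k : ℤ) t) r -
          Polynomial.eval (lamHalf (a * b * c * d) (q2 : ℂ) ((k : ℤ) + 2) t) r =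
        (lamHalf (a * b * c * d) (q2 : ℂ) (k : ℤ) t -
            lamHalf (a * b * c * d) (q2 : ℂ) ((k : ℤ) + 2) t) *
          Polynomial.eval (lamHalf (a * b * c * d) (q2 : ℂ) ((k : ℤ) + 1) t) rbar) ∧
    -- (3)  the kernel of `r ↦ r̄` consists exactly of the constants
    (∀ r : Polynomial ℂ,
      (∀ t : ℂ, t ≠ 0 →
        Polynomial.eval (lamHalf (a * b * c * d) (q2 : ℂ) (k : ℤ) t) r =
          Polynomial.eval (lamHalf (a * b * c * d) (q2 : ℂ) ((k : ℤ) + 2) t) r) →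
      ∃ c0 : ℂ, r = Polynomial.C c0) := by

  have hs : (q2:ℂ) ≠ 0 := Complex.ofReal_ne_zero.mpr (ne_of_gt hq2pos)
  have hq2lt1 : q2 < 1 := by nlinarith
  have hq2sqne : q2^2 ≠ 1 := by nlinarith
  have hA : a*b*c*d ≠ 0 := mul_ne_zero (mul_ne_zero (mul_ne_zero ha hb) hc) hd
  set s : ℂ := (q2:ℂ) with hsdef
  set A : ℂ := a*b*c*d with hAdef
  set σc : ℂ := (s^2+1)/s with hσc
  set τc : ℂ := (s-1)^2*(s^2+A)/s^3 with hτc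
  set E1 : ℂ := (-((s-1)^2*(s^2+A)))/s^3 with hE1
  set E0 : ℂ := (A*s*(s^2-1)^2 - (s-1)^2*(s^2+A)^2)/s^5 with hE0
  set Sp : Polynomial ℂ := Polynomial.C σc * Polynomial.X + Polynomial.C τc with hSp
  set Pp : Polynomial ℂ := Polynomial.X^2 + Polynomial.C E1 * Polynomial.X + Polynomial.C E0
    with hPp
  -- the three basic identities
  have hsum : ∀ t : ℂ, t ≠ 0 → lamHalf A s (k:ℤ) t + lamHalf A s ((k:ℤ)+2) t
      = Sp.eval (lamHalf A s ((k:ℤ)+1) t) := by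
    intro t ht
    obtain ⟨r0, r1, r2⟩ := lam_frac s A hs k t ht
    rw [r0, r1, r2, hSp]
    simp only [Polynomial.eval_add, Polynomial.eval_mul, Polynomial.eval_C, Polynomial.eval_X]
    rw [hσc, hτc]
    exact I1 s A t (s^k) hs ht (pow_ne_zero _ hs)
  have hprod : ∀ t : ℂ, t ≠ 0 → lamHalf A s (k:ℤ) t * lamHalf A s ((k:ℤ)+2) t
      = Pp.eval (lamHalf A s ((k:ℤ)+1) t) := by
    intro t ht
    obtain ⟨r0, r1, r2⟩ := lam_frac s A hs k t ht
    rw [r0, r1, r2, hPp]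
    simp only [Polynomial.eval_add, Polynomial.eval_mul, Polynomial.eval_C, Polynomial.eval_X,
      Polynomial.eval_pow]
    rw [hE1, hE0]
    exact I2 s A t (s^k) hs ht (pow_ne_zero _ hs)
  have hshift : ∀ t : ℂ, t ≠ 0 →
      lamHalf A s ((k:ℤ)+2) t = lamHalf A s (k:ℤ) (t / (q:ℂ)) := by
    intro t ht
    have hqc : ((q:ℝ):ℂ) = s^2 := by rw [hsdef, ← hq2]; push_cast; ring
    rw [hqc]
    obtain ⟨-, -, r2⟩ := lam_frac s A hs k t ht
    obtain ⟨r0', -, -⟩ := lam_frac s A hs k (t/s^2) (div_ne_zero ht (pow_ne_zero 2 hs))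
    rw [r2, r0']
    exact I3 s A t (s^k) hs ht (pow_ne_zero _ hs)
  -- leading-coefficient sequence
  set lC : ℕ → ℂ := fun n => ((lRseq q2 n : ℝ) : ℂ) with hlC
  have hl1 : lC 1 = 1 := by
    rw [hlC]; simp [lRseq_one q2 (ne_of_gt hq2pos) hq2sqne]
  have hl2 : lC 2 = σc := by
    rw [hlC]; simp only [lRseq_two q2 (ne_of_gt hq2pos) hq2sqne]
    rw [hσc, hsdef]; push_cast; ring
  have hlrec : ∀ n, lC (n+3) = σc * lC (n+2) - lC (n+1) := by
    intro n
    rw [hlC]; simp only [lRseq_rec q2 (ne_of_gt hq2pos) hq2sqne n]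
    rw [hσc, hsdef]; push_cast; ring
  have hlne : ∀ n, lC (n+1) ≠ 0 := by
    intro n
    rw [hlC]
    simpa using Complex.ofReal_ne_zero.mpr (ne_of_gt (lRseq_pos q2 hq2pos hq2lt1 n))
  have hOcoeff : ∀ n, (Oseq Sp Pp (n+1)).natDegree ≤ n ∧ (Oseq Sp Pp (n+1)).coeff n = lC (n+1) := by
    have := Oseq_coeff σc τc E1 E0 lC hl1 hl2 hlrec
    rw [← hSp, ← hPp] at this
    exact this
  -- kernel
  have hker : ∀ r : Polynomial ℂ,
      (∀ t : ℂ, t ≠ 0 → Polynomial.eval (lamHalf A s (k:ℤ) t) r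
        = Polynomial.eval (lamHalf A s ((k:ℤ)+2) t) r) → ∃ c0 : ℂ, r = Polynomial.C c0 := by
    intro r hr
    set z : ℕ → ℂ := fun n => (((q⁻¹)^n : ℝ) : ℂ) with hz
    have hqinvpos : (0:ℝ) < q⁻¹ := by positivity
    have h1q : 1 < q⁻¹ := (one_lt_inv₀ hq0).mpr hq1
    have hzne : ∀ n, z n ≠ 0 := by
      intro n; rw [hz]; exact Complex.ofReal_ne_zero.mpr (by positivity)
    have hzq : ∀ n, z (n+1) = z n / (q:ℂ) := by
      intro n; rw [hz]; push_cast
      rw [pow_succ, div_eq_mul_inv]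
    have hchain : ∀ n, Polynomial.eval (lamHalf A s (k:ℤ) (z n)) r
        = Polynomial.eval (lamHalf A s (k:ℤ) (z 0)) r := by
      intro n
      induction n with
      | zero => rfl
      | succ n ih => rw [hzq n, ← hshift (z n) (hzne n), ← hr (z n) (hzne n)]; exact ih
    have hrw : ∀ n, lamHalf A s (k:ℤ) (z n)
        = (s^k * (q:ℂ)^n - 1) * (1 - A * s^(-(k:ℤ)-2) * z n) := by
      intro n
      have hzinv : (z n)⁻¹ = (q:ℂ)^n := by
        rw [hz]; push_cast; rw [inv_pow, inv_inv]
      simp only [lamHalf, zpow_natCast, div_eq_mul_inv, hzinv]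
    have hqlt : ‖(q:ℂ)‖ < 1 := by
      rw [Complex.norm_real, Real.norm_eq_abs, abs_of_pos hq0]; exact hq1
    have hf1 : Tendsto (fun n => ‖s^k * (q:ℂ)^n - 1‖) atTop (𝓝 1) := by
      have h0 : Tendsto (fun n : ℕ => (q:ℂ)^n) atTop (𝓝 0) :=
        tendsto_pow_atTop_nhds_zero_of_norm_lt_one hqlt
      have h2 := ((tendsto_const_nhds (x := s^k) (f := atTop)).mul h0).sub_const 1
      have h3 := h2.norm
      simpa using h3
    set cst : ℝ := ‖A * s^(-(k:ℤ)-2)‖ with hcst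
    have hcpos : 0 < cst := by
      rw [hcst]
      exact norm_pos_iff.mpr (mul_ne_zero hA (zpow_ne_zero _ hs))
    have hzn : ∀ n, ‖z n‖ = (q⁻¹)^n := by
      intro n; rw [hz]
      simp only [Complex.norm_real, Real.norm_eq_abs]
      exact abs_of_pos (by positivity)
    have hf2 : Tendsto (fun n => ‖1 - A * s^(-(k:ℤ)-2) * z n‖) atTop atTop := by
      have hlow : Tendsto (fun n : ℕ => cst * (q⁻¹)^n + (-1)) atTop atTop :=
        tendsto_atTop_add_const_right _ _
          ((tendsto_pow_atTop_atTop_of_one_lt h1q).const_mul_atTop hcpos)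
      refine tendsto_atTop_mono (fun n => ?_) hlow
      have h5 : ‖A * s^(-(k:ℤ)-2) * z n‖ - ‖(1:ℂ)‖ ≤ ‖A * s^(-(k:ℤ)-2) * z n - 1‖ :=
        norm_sub_norm_le _ _
      rw [norm_sub_rev] at h5
      rw [norm_mul, ← hcst, hzn n, norm_one] at h5
      linarith
    have hnorm : Tendsto (fun n => ‖lamHalf A s (k:ℤ) (z n)‖) atTop atTop := by
      have := Filter.Tendsto.pos_mul_atTop one_pos hf1 hf2
      refine this.congr (fun n => ?_)
      rw [hrw n, norm_mul]
    exact const_of_eval_eq r (fun n => lamHalf A s (k:ℤ) (z n)) hnorm hchain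
  refine ⟨?_, ?_, hker⟩
  · intro rbar
    obtain ⟨r, hrel⟩ := rel_surj Sp Pp
      (fun t => lamHalf A s (k:ℤ) t) (fun t => lamHalf A s ((k:ℤ)+2) t)
      (fun t => lamHalf A s ((k:ℤ)+1) t) hsum hprod lC hOcoeff hlne
      rbar.natDegree rbar le_rfl
    refine ⟨r, fun t ht => hrel t ht, ?_⟩
    intro r' hr'
    have hdiff : ∀ t : ℂ, t ≠ 0 → Polynomial.eval (lamHalf A s (k:ℤ) t) (r' - r)
        = Polynomial.eval (lamHalf A s ((k:ℤ)+2) t) (r' - r) := by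
      intro t ht
      have h1 := hrel t ht
      have h2 := hr' t ht
      simp only [Polynomial.eval_sub]
      linear_combination h2 - h1
    obtain ⟨c0, hc0⟩ := hker (r' - r) hdiff
    exact ⟨c0, by rw [← hc0]; ring⟩
  · intro r
    exact ⟨∑ i ∈ Finset.range (r.natDegree+1), Polynomial.C (r.coeff i) * Oseq Sp Pp i,
      fun t ht => rel_lin Sp Pp
        (fun t => lamHalf A s (k:ℤ) t) (fun t => lamHalf A s ((k:ℤ)+2) t)
        (fun t => lamHalf A s ((k:ℤ)+1) t) hsum hprod r t ht⟩
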